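/- Let A be a finite abelian group and β : A × A → ℂ* a bimultiplicative nondegenerate form. Then for every a ∈ A of order n there exists b ∈ A such that β(a, b) is a primitive n-th root of unity. -/

import Mathlib

/-- Let `A` be a finite abelian group and `β : A × A → ℂ*` a bimultiplicative
nondegenerate form.  Then for every `a ∈ A` of order `n` there exists `b ∈ A` such that
`β(a, b)` is a primitive `n`-th root of unity. -/
theorem exists_primitive_pairing_value
    (A : Type*) [CommGroup A] [Fintype A]
    (β : A → A → ℂˣ)
    (hl : ∀ x y z : A, β (x * y) z = β x z * β y z)
    (hr : ∀ x y z : A, β x (y * z) = β x y * β x z)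
    (hnd : ∀ x : A, (∀ y : A, β x y = 1) → x = 1) :
    ∀ (a : A) (n : ℕ), orderOf a = n → ∃ b : A, IsPrimitiveRoot (β a b) n := by
  intro a n hn
  subst hn
  have h1l : ∀ y, β 1 y = 1 := by
    intro y
    have := hl 1 1 y
    rw [one_mul] at this
    exact right_eq_mul.mp this
  have hpow : ∀ (k : ℕ) (y : A), β (a ^ k) y = (β a y) ^ k := by
    intro k y
    induction k with
    | zero => simpa using h1l y
    | succ k ih => rw [pow_succ, pow_succ, hl, ih]
  set φ : A →* ℂˣ :=
    { toFun := β a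
      map_one' := by
        have := hr a 1 1
        rw [one_mul] at this
        exact right_eq_mul.mp this
      map_mul' := hr a } with hφ
  haveI : Finite φ.range := Finite.of_surjective φ.rangeRestrict φ.rangeRestrict_surjective
  obtain ⟨g, hg⟩ := IsCyclic.exists_generator (α := φ.range)
  obtain ⟨b, hb⟩ := g.2
  have hb' : β a b = (g : ℂˣ) := hb
  set d := orderOf (g : ℂˣ) with hd
  -- d ∣ n
  have hdn : d ∣ orderOf a := by
    apply orderOf_dvd_of_pow_eq_one
    rw [← hb', ← hpow, pow_orderOf_eq_one, h1l]
  -- n ∣ d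
  have hnd' : orderOf a ∣ d := by
    apply orderOf_dvd_of_pow_eq_one
    apply hnd
    intro y
    rw [hpow]
    have hy : φ y ∈ φ.range := ⟨y, rfl⟩
    obtain ⟨k, hk⟩ := hg ⟨φ y, hy⟩
    have hk' : (g : ℂˣ) ^ k = φ y := by
      have := congrArg (Subtype.val) hk
      simpa using this
    show (φ y : ℂˣ) ^ d = 1
    rw [← hk', ← zpow_natCast, ← zpow_mul, mul_comm, zpow_mul, zpow_natCast,
      pow_orderOf_eq_one, one_zpow]
  have hdeq : orderOf (β a b) = orderOf a := by
    rw [hb', ← hd]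
    exact Nat.dvd_antisymm hdn hnd'
  exact ⟨b, hdeq ▸ IsPrimitiveRoot.orderOf (β a b)⟩
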